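/- Induction step in the recovery-sequence argument: Let q ≥ 0 and Θ : (0,∞) → [−∞,∞] satisfy Θ(s) ≥ q for all s > 0, Θ(s₁) ≤ 2q for all s₁ > 0, and the recursion 2(1 − s₂/s₁)q + (s₂²/s₁²)Θ(s₂) − Θ(s₁) ≥ 0 for all s₁, s₂ > 0. Then Θ(s) ≤ ((m+1)/m) q for all s > 0 and all m ∈ ℕ, and consequently Θ(s) = q for all s > 0. -/

import Mathlib

/-- the induction step in the recovery-sequence argument.  If
`Θ : (0,∞) → [−∞,∞]` satisfies `Θ ≥ q`, `Θ ≤ 2q` and the recursion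
`2(1 − s₂/s₁)q + (s₂²/s₁²)Θ(s₂) − Θ(s₁) ≥ 0`, then `Θ(s) ≤ ((m+1)/m)q` for all `m ∈ ℕ`,
and consequently `Θ(s) = q` for all `s > 0`. -/
theorem recovery_sequence_induction (q : ℝ) (hq : 0 ≤ q) (Θ : ℝ → EReal)
    (hlow : ∀ s : ℝ, 0 < s → (q : EReal) ≤ Θ s)
    (hup : ∀ s : ℝ, 0 < s → Θ s ≤ ((2 * q : ℝ) : EReal))
    (hrec : ∀ s₁ s₂ : ℝ, 0 < s₁ → 0 < s₂ →
      0 ≤ ((2 * (1 - s₂ / s₁) * q : ℝ) : EReal) +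
        ((s₂ ^ 2 / s₁ ^ 2 : ℝ) : EReal) * Θ s₂ - Θ s₁) :
    (∀ s : ℝ, 0 < s → ∀ m : ℕ, 1 ≤ m →
      Θ s ≤ ((((m : ℝ) + 1) / (m : ℝ) * q : ℝ) : EReal)) ∧
    ∀ s : ℝ, 0 < s → Θ s = (q : EReal) := by
  set θ : ℝ → ℝ := fun s => (Θ s).toReal with hθdef
  have hfin : ∀ s : ℝ, 0 < s → Θ s = ((θ s : ℝ) : EReal) := by
    intro s hs
    have h1 : Θ s ≠ ⊤ := fun h => by
      have := hup s hs; rw [h] at this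
      exact (EReal.coe_lt_top (2 * q)).not_ge this
    have h2 : Θ s ≠ ⊥ := fun h => by
      have := hlow s hs; rw [h] at this
      exact (EReal.bot_lt_coe q).not_ge this
    exact (EReal.coe_toReal h1 h2).symm
  have hlowR : ∀ s : ℝ, 0 < s → q ≤ θ s := fun s hs => by
    have := hlow s hs; rw [hfin s hs] at this; exact_mod_cast this
  have hupR : ∀ s : ℝ, 0 < s → θ s ≤ 2 * q := fun s hs => by
    have := hup s hs; rw [hfin s hs] at this; exact_mod_cast this
  have hrecR : ∀ s₁ s₂ : ℝ, 0 < s₁ → 0 < s₂ →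
      θ s₁ ≤ 2 * (1 - s₂ / s₁) * q + s₂ ^ 2 / s₁ ^ 2 * θ s₂ := by
    intro s₁ s₂ h₁ h₂
    have := hrec s₁ s₂ h₁ h₂
    rw [hfin s₁ h₁, hfin s₂ h₂] at this
    rw [← EReal.coe_mul, ← EReal.coe_add, ← EReal.coe_sub] at this
    have h0 : (0 : ℝ) ≤ 2 * (1 - s₂ / s₁) * q + s₂ ^ 2 / s₁ ^ 2 * θ s₂ - θ s₁ :=
      by exact_mod_cast this
    linarith
  have key : ∀ m : ℕ, 1 ≤ m → ∀ s : ℝ, 0 < s → θ s ≤ ((m : ℝ) + 1) / (m : ℝ) * q := by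
    intro m hm
    induction m with
    | zero => omega
    | succ n ih =>
      rcases Nat.eq_or_lt_of_le hm with h | h
      · intro s hs
        simp only [← h]
        have := hupR s hs
        norm_num
        linarith
      · have hn : 1 ≤ n := by omega
        intro s hs
        set N : ℝ := (n : ℝ) with hN
        have hN1 : (1 : ℝ) ≤ N := by rw [hN]; exact_mod_cast hn
        have hNpos : 0 < N := by linarith
        have hN1pos : 0 < N + 1 := by linarith
        set s₂ : ℝ := N / (N + 1) * s with hs₂
        have hs₂pos : 0 < s₂ := by positivity
        have hrat : s₂ / s = N / (N + 1) := by
          rw [hs₂]; field_simp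
        have h1 := hrecR s s₂ hs hs₂pos
        have h2 := ih hn s₂ hs₂pos
        have hratsq : s₂ ^ 2 / s ^ 2 = (N / (N + 1)) ^ 2 := by
          rw [← div_pow, hrat]
        rw [hrat, hratsq] at h1
        have hcoef : 0 ≤ (N / (N + 1)) ^ 2 := by positivity
        have h3 : (N / (N + 1)) ^ 2 * θ s₂ ≤ (N / (N + 1)) ^ 2 * ((N + 1) / N * q) :=
          mul_le_mul_of_nonneg_left h2 hcoef
        have hgoal : 2 * (1 - N / (N + 1)) * q + (N / (N + 1)) ^ 2 * ((N + 1) / N * q)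
            = ((n : ℝ) + 1 + 1) / ((n : ℝ) + 1) * q := by
          rw [← hN]; field_simp; ring
        push_cast
        calc θ s ≤ 2 * (1 - N / (N + 1)) * q + (N / (N + 1)) ^ 2 * θ s₂ := h1
          _ ≤ 2 * (1 - N / (N + 1)) * q + (N / (N + 1)) ^ 2 * ((N + 1) / N * q) := by linarith
          _ = ((n : ℝ) + 1 + 1) / ((n : ℝ) + 1) * q := hgoal
  have hle : ∀ s : ℝ, 0 < s → θ s ≤ q := by
    intro s hs
    by_contra h
    push_neg at h
    have hε : 0 < θ s - q := by linarith
    obtain ⟨n, hn⟩ := exists_nat_gt (q / (θ s - q))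
    have hn1 : 1 ≤ n := by
      by_contra hn0
      push_neg at hn0
      interval_cases n
      simp at hn
      have : 0 ≤ q / (θ s - q) := div_nonneg hq hε.le
      linarith
    have hNpos : (0 : ℝ) < n := by exact_mod_cast hn1
    have h1 := key n hn1 s hs
    have h2 : q < (θ s - q) * n := by
      rw [div_lt_iff₀ hε] at hn; linarith
    have h3 : ((n : ℝ) + 1) / (n : ℝ) * q = q + q / n := by field_simp
    rw [h3] at h1
    have h4 : q / n < θ s - q := by
      rw [div_lt_iff₀ hNpos]; linarith
    linarith
  constructor
  · intro s hs m hm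
    rw [hfin s hs, EReal.coe_le_coe_iff]
    exact key m hm s hs
  · intro s hs
    rw [hfin s hs, EReal.coe_eq_coe_iff]
    exact le_antisymm (hle s hs) (hlowR s hs)
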